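/- Let (X, d) be a compact metric space, μ a Borel probability measure on X, and let n, c₂ > 0 be real numbers such that μ(B(x,r)) ≤ c₂·rⁿ for every x ∈ X and every r > 0, where B(x,r) is the open ball. Let g : [0,∞) → [0,∞) be nondecreasing, subadditive, with lim_{t→0⁺} g(t) = 0. Then there exists a constant c > 0 depending only on c₂ and n such that for every integer N ≥ 1 and every Borel probability measure ν on X whose support contains at most N points, W_g(ν, μ) ≥ c · g(N^{−1/n}). -/

import Mathlib

open MeasureTheory

/-- The generalized Wasserstein distance `W_g`: the infimum, over all couplings `θ` of `ν₁`
and `ν₂`, of `∫ g(d(x,y)) dθ(x,y)`. -/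
noncomputable def Wg {X : Type*} [MetricSpace X] [MeasurableSpace X]
    (g : ℝ → ℝ) (ν₁ ν₂ : Measure X) : ℝ :=
  sInf { r : ℝ | ∃ θ : Measure (X × X), IsProbabilityMeasure θ ∧
    θ.map Prod.fst = ν₁ ∧ θ.map Prod.snd = ν₂ ∧ r = ∫ q, g (dist q.1 q.2) ∂θ }

/-- Subadditivity iterated: `g (k * t) ≤ k * g t` for `k ≥ 1`. -/
lemma g_nat_mul {g : ℝ → ℝ}
    (hgsub : ∀ s t : ℝ, 0 ≤ s → 0 ≤ t → g (s + t) ≤ g s + g t) :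
    ∀ k : ℕ, ∀ t : ℝ, 0 ≤ t → g (((k + 1 : ℕ) : ℝ) * t) ≤ ((k + 1 : ℕ) : ℝ) * g t := by
  intro k
  induction k with
  | zero => intro t ht; simp
  | succ k ih =>
    intro t ht
    have h1 : ((k + 1 + 1 : ℕ) : ℝ) * t = ((k + 1 : ℕ) : ℝ) * t + t := by push_cast; ring
    calc g (((k + 1 + 1 : ℕ) : ℝ) * t) ≤ g (((k + 1 : ℕ) : ℝ) * t) + g t := by
          rw [h1]; exact hgsub _ _ (by positivity) ht
      _ ≤ ((k + 1 : ℕ) : ℝ) * g t + g t := by linarith [ih t ht]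
      _ = ((k + 1 + 1 : ℕ) : ℝ) * g t := by push_cast; ring

/-- The lower bound in (optimalquantization2): if `μ(B(x,r)) ≤ c₂ rⁿ` for all `x` and `r > 0`,
then every probability measure `ν` supported on at most `N` points satisfies
`W_g(ν, μ) ≥ c · g(N^{-1/n})`, with `c > 0` depending only on `c₂` and `n`. -/
theorem Wg_lower_bound_finitely_supported {X : Type*} [MetricSpace X]
    [CompactSpace X] [MeasurableSpace X] [BorelSpace X] [Nonempty X]
    (μ : Measure X) [IsProbabilityMeasure μ]
    (n c₂ : ℝ) (hn : 0 < n) (hc₂ : 0 < c₂)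
    (hball : ∀ (x : X) (r : ℝ), 0 < r → (μ (Metric.ball x r)).toReal ≤ c₂ * r ^ n)
    (g : ℝ → ℝ) (hg0 : ∀ t : ℝ, 0 ≤ t → 0 ≤ g t)
    (hgmono : ∀ s t : ℝ, 0 ≤ s → s ≤ t → g s ≤ g t)
    (hgsub : ∀ s t : ℝ, 0 ≤ s → 0 ≤ t → g (s + t) ≤ g s + g t)
    (hglim : Filter.Tendsto g (nhdsWithin 0 (Set.Ioi 0)) (nhds 0)) :
    ∃ c > 0, ∀ N : ℕ, 1 ≤ N → ∀ ν : Measure X, IsProbabilityMeasure ν →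
      (∃ S : Finset X, S.card ≤ N ∧ ν ↑S = 1) →
      c * g ((N : ℝ) ^ (-(1 / n))) ≤ Wg g ν μ := by
  have h2c : (0:ℝ) < 2 * c₂ := by linarith
  set a : ℝ := (2 * c₂) ^ (-(1 / n)) with ha_def
  have ha : 0 < a := Real.rpow_pos_of_pos h2c _
  set m : ℕ := ⌈(2 * c₂) ^ (1 / n)⌉₊ with hm_def
  have hm1 : 1 ≤ m := Nat.one_le_ceil_iff.mpr (Real.rpow_pos_of_pos h2c _)
  have hma : 1 ≤ (m : ℝ) * a := by
    have h1 : (2 * c₂) ^ (1 / n) ≤ (m : ℝ) := Nat.le_ceil _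
    have h2 : a = ((2 * c₂) ^ (1 / n))⁻¹ := Real.rpow_neg h2c.le (1 / n)
    have h3 : 0 < (2 * c₂) ^ (1 / n) := Real.rpow_pos_of_pos h2c _
    rw [h2]
    calc (1:ℝ) = (2 * c₂) ^ (1/n) * ((2 * c₂) ^ (1/n))⁻¹ := by field_simp
      _ ≤ (m : ℝ) * ((2 * c₂) ^ (1/n))⁻¹ := by
          apply mul_le_mul_of_nonneg_right (Nat.le_ceil _) (by positivity)
  refine ⟨1 / (2 * m), by positivity, ?_⟩
  rintro N hN ν hν ⟨S, hScard, hSfull⟩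
  have hNpos : (0:ℝ) < N := by exact_mod_cast hN
  set t : ℝ := (N : ℝ) ^ (-(1 / n)) with ht_def
  have htpos : 0 < t := Real.rpow_pos_of_pos hNpos _
  set r : ℝ := a * t with hr_def
  have hrpos : 0 < r := mul_pos ha htpos
  -- key computation: c₂ * r ^ n = 1 / (2 * N)
  have hrn : c₂ * r ^ n = 1 / (2 * (N:ℝ)) := by
    have han : a ^ n = (2 * c₂)⁻¹ := by
      rw [ha_def, ← Real.rpow_mul h2c.le]
      rw [show -(1/n) * n = -1 by field_simp]
      exact Real.rpow_neg_one _
    have htn : t ^ n = (N : ℝ)⁻¹ := by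
      rw [ht_def, ← Real.rpow_mul hNpos.le]
      rw [show -(1/n) * n = -1 by field_simp]
      exact Real.rpow_neg_one _
    rw [hr_def, Real.mul_rpow ha.le htpos.le, han, htn]
    field_simp
  -- the bad set U
  set U : Set X := ⋃ x ∈ S, Metric.ball x r with hU_def
  have hUopen : IsOpen U := isOpen_biUnion fun x _ => Metric.isOpen_ball
  have hUmeas : MeasurableSet U := hUopen.measurableSet
  have hUsmall : (μ U).toReal ≤ 1 / 2 := by
    have h1 : μ U ≤ ∑ x ∈ S, μ (Metric.ball x r) := measure_biUnion_finset_le S _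
    have h2 : (μ U).toReal ≤ ∑ x ∈ S, (μ (Metric.ball x r)).toReal := by
      calc (μ U).toReal ≤ (∑ x ∈ S, μ (Metric.ball x r)).toReal :=
            ENNReal.toReal_mono (by simp [ENNReal.sum_lt_top.mpr fun x _ => (measure_lt_top μ _)] ) h1
        _ = ∑ x ∈ S, (μ (Metric.ball x r)).toReal :=
            ENNReal.toReal_sum fun x _ => (measure_lt_top μ _).ne
    calc (μ U).toReal ≤ ∑ x ∈ S, (μ (Metric.ball x r)).toReal := h2
      _ ≤ ∑ _x ∈ S, c₂ * r ^ n := Finset.sum_le_sum fun x _ => hball x r hrpos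
      _ = S.card * (c₂ * r ^ n) := by rw [Finset.sum_const, nsmul_eq_mul]
      _ ≤ N * (c₂ * r ^ n) := by
          apply mul_le_mul_of_nonneg_right (by exact_mod_cast hScard)
          positivity
      _ = 1 / 2 := by rw [hrn]; field_simp
  -- now bound the infimum
  unfold Wg
  apply le_csInf
  · -- nonempty: the product coupling
    refine ⟨∫ q, g (dist q.1 q.2) ∂(ν.prod μ), ν.prod μ, by infer_instance, ?_, ?_, rfl⟩
    · rw [Measure.map_fst_prod]; simp
    · rw [Measure.map_snd_prod]; simp
  rintro b ⟨θ, hθ, hθ1, hθ2, rfl⟩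
  -- set where distance is at least r
  have hdistmeas : Measurable fun q : X × X => dist q.1 q.2 :=
    (continuous_fst.dist continuous_snd).measurable
  set A : Set (X × X) := {q | r ≤ dist q.1 q.2} with hA_def
  have hA : MeasurableSet A := hdistmeas measurableSet_Ici
  have hSmeas : MeasurableSet (↑S : Set X) := S.measurableSet
  set B : Set (X × X) := (↑S : Set X) ×ˢ Uᶜ with hB_def
  have hBmeas : MeasurableSet B := hSmeas.prod hUmeas.compl
  have hBsubA : B ⊆ A := by
    rintro ⟨x, y⟩ ⟨hx, hy⟩
    simp only [hA_def, Set.mem_setOf_eq]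
    by_contra hlt
    push_neg at hlt
    exact hy (Set.mem_biUnion hx (by simpa [Metric.mem_ball, dist_comm] using hlt))
  -- θ Bᶜ ≤ μ U
  have hνScompl : ν ((↑S : Set X)ᶜ) = 0 := by
    have := measure_compl hSmeas (measure_ne_top ν _)
    rw [hSfull] at this
    simpa [hν.measure_univ] using this
  have hBcompl : (θ Bᶜ).toReal ≤ 1 / 2 := by
    have hsub : Bᶜ ⊆ (Prod.fst ⁻¹' (↑S : Set X)ᶜ) ∪ (Prod.snd ⁻¹' U) := by
      rintro ⟨x, y⟩ hq
      simp only [hB_def, Set.mem_prod, Set.mem_compl_iff, not_and_or, not_not] at hq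
      rcases hq with h | h
      · exact Or.inl h
      · exact Or.inr h
    have h1 : θ (Prod.fst ⁻¹' (↑S : Set X)ᶜ) = 0 := by
      have : ν ((↑S : Set X)ᶜ) = θ (Prod.fst ⁻¹' (↑S : Set X)ᶜ) := by
        rw [← hθ1, Measure.map_apply measurable_fst hSmeas.compl]
      rw [← this, hνScompl]
    have h2 : θ (Prod.snd ⁻¹' U) = μ U := by
      rw [← hθ2, Measure.map_apply measurable_snd hUmeas]
    calc (θ Bᶜ).toReal ≤ (θ ((Prod.fst ⁻¹' (↑S : Set X)ᶜ) ∪ (Prod.snd ⁻¹' U))).toReal :=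
          ENNReal.toReal_mono (measure_ne_top θ _) (measure_mono hsub)
      _ ≤ (θ (Prod.fst ⁻¹' (↑S : Set X)ᶜ) + θ (Prod.snd ⁻¹' U)).toReal :=
          ENNReal.toReal_mono (by finiteness) (measure_union_le _ _)
      _ = (μ U).toReal := by rw [h1, h2, zero_add]
      _ ≤ 1 / 2 := hUsmall
  have hθA : (1:ℝ) / 2 ≤ (θ A).toReal := by
    have hadd : (θ B).toReal + (θ Bᶜ).toReal = 1 := by
      rw [← ENNReal.toReal_add (measure_ne_top θ _) (measure_ne_top θ _),
        measure_add_measure_compl hBmeas, hθ.measure_univ, ENNReal.toReal_one]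
    have hBA : (θ B).toReal ≤ (θ A).toReal :=
      ENNReal.toReal_mono (measure_ne_top θ _) (measure_mono hBsubA)
    linarith
  -- integrability
  set G : ℝ → ℝ := fun s => g (max s 0) with hG_def
  have hGmono : Monotone G := fun s u h =>
    hgmono _ _ (le_max_right _ _) (max_le_max h le_rfl)
  have hfeq : (fun q : X × X => g (dist q.1 q.2)) = fun q => G (dist q.1 q.2) := by
    funext q; simp [hG_def, max_eq_left dist_nonneg]
  have hfmeas : Measurable fun q : X × X => g (dist q.1 q.2) := by
    rw [hfeq]; exact hGmono.measurable.comp hdistmeas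
  set D : ℝ := Metric.diam (Set.univ : Set X) with hD_def
  have hDb : ∀ q : X × X, dist q.1 q.2 ≤ D := fun q =>
    Metric.dist_le_diam_of_mem isCompact_univ.isBounded (Set.mem_univ _) (Set.mem_univ _)
  have hfint : Integrable (fun q : X × X => g (dist q.1 q.2)) θ := by
    refine Integrable.mono' (integrable_const (g D)) hfmeas.aestronglyMeasurable
      (Filter.Eventually.of_forall fun q => ?_)
    rw [Real.norm_eq_abs, abs_of_nonneg (hg0 _ dist_nonneg)]
    exact hgmono _ _ dist_nonneg (hDb q)
  -- lower bound the integral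
  have hgr0 : 0 ≤ g r := hg0 _ hrpos.le
  have hint : g r * (1/2) ≤ ∫ q, g (dist q.1 q.2) ∂θ := by
    have hindint : Integrable (A.indicator fun _ : X × X => g r) θ :=
      (integrable_const (g r)).indicator hA
    have hle : ∀ q, A.indicator (fun _ : X × X => g r) q ≤ g (dist q.1 q.2) := by
      intro q
      by_cases hq : q ∈ A
      · rw [Set.indicator_of_mem hq]
        exact hgmono _ _ hrpos.le hq
      · rw [Set.indicator_of_notMem hq]
        exact hg0 _ dist_nonneg
    calc g r * (1/2) ≤ g r * (θ A).toReal := by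
          apply mul_le_mul_of_nonneg_left hθA hgr0
      _ = ∫ q, A.indicator (fun _ : X × X => g r) q ∂θ := by
          rw [integral_indicator_const _ hA, smul_eq_mul, mul_comm]; rfl
      _ ≤ ∫ q, g (dist q.1 q.2) ∂θ := integral_mono hindint hfint hle
  -- relate g t and g r via subadditivity
  have hgt : g t ≤ (m : ℝ) * g r := by
    have htmr : t ≤ (m : ℝ) * r := by
      calc t = 1 * t := (one_mul t).symm
        _ ≤ ((m : ℝ) * a) * t := by apply mul_le_mul_of_nonneg_right hma htpos.le
        _ = (m : ℝ) * r := by rw [hr_def]; ring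
    obtain ⟨k, hk⟩ : ∃ k, m = k + 1 := ⟨m - 1, (Nat.succ_pred_eq_of_pos hm1).symm⟩
    calc g t ≤ g ((m : ℝ) * r) := hgmono _ _ htpos.le htmr
      _ ≤ (m : ℝ) * g r := by
          rw [hk]; exact_mod_cast g_nat_mul hgsub k r hrpos.le
  -- conclude
  have hmpos : (0:ℝ) < m := by exact_mod_cast hm1
  calc (1 / (2 * (m:ℝ))) * g t ≤ (1 / (2 * (m:ℝ))) * ((m:ℝ) * g r) := by
        apply mul_le_mul_of_nonneg_left hgt (by positivity)
    _ = g r * (1/2) := by field_simp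
    _ ≤ ∫ q, g (dist q.1 q.2) ∂θ := hint
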